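/- Let (V,d) be a finite metric space with |V| = n ≥ 2, and for each point i take N(i) = V∖{i}. Let i ≠ j and let 0 < t < 1 satisfy 1 − t ≥ (t/d(i,j)²)·max(1/d_i, 1/d_j). Then W(D_{t,i}, D_{t,j}) ≥ (1−t)·d(i,j) − (t/(2·d(i,j)))·(1/d_i + 1/d_j). -/

import Mathlib

open Finset

/-- `A` is a coupling of the probability distributions `μ` and `ν`. -/
def IsCoupling {V : Type*} [Fintype V] (μ ν : V → ℝ) (A : V → V → ℝ) : Prop :=
  (∀ u v, 0 ≤ A u v) ∧ (∀ u, ∑ v, A u v = μ u) ∧ (∀ v, ∑ u, A u v = ν v)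

/-- The Wasserstein (transportation) cost between two probability distributions on a
finite metric space: the infimum (= minimum) over all couplings of the transport cost. -/
noncomputable def Wcost {V : Type*} [Fintype V] [MetricSpace V] (μ ν : V → ℝ) : ℝ :=
  sInf {c : ℝ | ∃ A : V → V → ℝ, IsCoupling μ ν A ∧ c = ∑ u, ∑ v, A u v * dist u v}

/-- `dd N i = Σ_{k ∈ N} d(i,k)^{-2}`. -/
noncomputable def dd {V : Type*} [MetricSpace V] (N : Finset V) (i : V) : ℝ :=
  ∑ k ∈ N, ((dist i k)⁻¹) ^ 2

/-- `cc N i = Σ_{k ∈ N} d(i,k)^{-1}`. -/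
noncomputable def cc {V : Type*} [MetricSpace V] (N : Finset V) (i : V) : ℝ :=
  ∑ k ∈ N, (dist i k)⁻¹

/-- The probability distribution `D_{t,i}` concentrated at `i` with mass `t` spread on the
neighbor set `N`. -/
noncomputable def Dprob {V : Type*} [MetricSpace V] [DecidableEq V]
    (N : Finset V) (t : ℝ) (i : V) : V → ℝ := fun v =>
  if v = i then 1 - t else if v ∈ N then t * ((dist i v)⁻¹) ^ 2 / dd N i else 0

lemma pair_aux (pu qu pv qv : ℝ) (hpu : 0 < pu) (hqu : 0 < qu) (hpv : 0 < pv) (hqv : 0 < qv) :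
    0 ≤ (pv⁻¹ ^ 2 * qu⁻¹ ^ 2 - pu⁻¹ ^ 2 * qv⁻¹ ^ 2) * (qv / (pv + qv) - qu / (pu + qu)) := by
  have h1 : pv⁻¹ ^ 2 * qu⁻¹ ^ 2 - pu⁻¹ ^ 2 * qv⁻¹ ^ 2
      = ((pu * qv - pv * qu) * (pu * qv + pv * qu)) / (pu ^ 2 * qu ^ 2 * pv ^ 2 * qv ^ 2) := by
    field_simp
    ring
  have h2 : qv / (pv + qv) - qu / (pu + qu) = (qv * pu - qu * pv) / ((pv + qv) * (pu + qu)) := by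
    rw [div_sub_div _ _ (by positivity) (by positivity)]
    ring_nf
  rw [h1, h2, div_mul_div_comm]
  apply div_nonneg
  · nlinarith [sq_nonneg (pu * qv - pv * qu), mul_pos hpu hqv, mul_pos hpv hqu]
  · positivity

lemma half_aux (p q : ℝ) (hp : 0 < p) (hq : 0 < q) :
    0 ≤ (p⁻¹ ^ 2 - q⁻¹ ^ 2) * (q / (p + q) - 1 / 2) := by
  have h1 : p⁻¹ ^ 2 - q⁻¹ ^ 2 = ((q - p) * (q + p)) / (p ^ 2 * q ^ 2) := by
    field_simp
    ring
  have h2 : q / (p + q) - 1 / 2 = (q - p) / (2 * (p + q)) := by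
    rw [div_sub_div _ _ (by positivity) (by norm_num)]
    ring_nf
  rw [h1, h2, div_mul_div_comm]
  apply div_nonneg
  · nlinarith [sq_nonneg (q - p)]
  · positivity

lemma Dprob_sum_one {V : Type*} [Fintype V] [MetricSpace V] [DecidableEq V]
    (i : V) (t : ℝ) (hd : dd (Finset.univ.erase i) i ≠ 0) :
    ∑ v, Dprob (Finset.univ.erase i) t i v = 1 := by
  rw [← Finset.sum_erase_add _ _ (Finset.mem_univ i)]
  have h1 : Dprob (Finset.univ.erase i) t i i = 1 - t := by
    simp [Dprob]
  have h2 : ∑ v ∈ Finset.univ.erase i, Dprob (Finset.univ.erase i) t i v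
      = ∑ v ∈ Finset.univ.erase i, t * ((dist i v)⁻¹) ^ 2 / dd (Finset.univ.erase i) i := by
    refine Finset.sum_congr rfl fun v hv => ?_
    rw [Dprob]
    rw [if_neg (Finset.mem_erase.1 hv).1, if_pos hv]
  rw [h1, h2, ← Finset.sum_div, ← Finset.mul_sum]
  rw [show ∑ v ∈ Finset.univ.erase i, ((dist i v)⁻¹) ^ 2 = dd (Finset.univ.erase i) i from rfl]
  rw [mul_div_assoc, div_self hd]
  ring

lemma Dprob_nonneg {V : Type*} [Fintype V] [MetricSpace V] [DecidableEq V]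
    (i : V) (t : ℝ) (ht0 : 0 ≤ t) (ht1 : t ≤ 1) (hd : 0 ≤ dd (Finset.univ.erase i) i) (v : V) :
    0 ≤ Dprob (Finset.univ.erase i) t i v := by
  rw [Dprob]
  split_ifs
  · linarith
  · exact div_nonneg (mul_nonneg ht0 (by positivity)) hd
  · exact le_refl 0

set_option maxHeartbeats 2000000 in
theorem complete_graph_local_cost_lower_bound {V : Type*} [Fintype V] [MetricSpace V]
    [DecidableEq V] (hn : 2 ≤ Fintype.card V)
    (i j : V) (hij : i ≠ j)
    (t : ℝ) (ht0 : 0 < t) (ht1 : t < 1)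
    (ht2 : 1 - t ≥ t / (dist i j) ^ 2 *
      max (1 / dd (Finset.univ.erase i) i) (1 / dd (Finset.univ.erase j) j)) :
    Wcost (Dprob (Finset.univ.erase i) t i) (Dprob (Finset.univ.erase j) t j) ≥
      (1 - t) * dist i j -
        t / (2 * dist i j) *
          (1 / dd (Finset.univ.erase i) i + 1 / dd (Finset.univ.erase j) j) := by
  classical
  have hD : (0:ℝ) < dist i j := dist_pos.mpr hij
  have hjmem : j ∈ Finset.univ.erase i := Finset.mem_erase.mpr ⟨hij.symm, Finset.mem_univ j⟩
  have himem : i ∈ Finset.univ.erase j := Finset.mem_erase.mpr ⟨hij, Finset.mem_univ i⟩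
  set di := dd (Finset.univ.erase i) i with hdi_def
  set dj := dd (Finset.univ.erase j) j with hdj_def
  have hdi_pos : 0 < di := by
    refine Finset.sum_pos' (fun k _ => by positivity) ⟨j, hjmem, ?_⟩
    have : (dist i j)⁻¹ > 0 := inv_pos.mpr hD
    positivity
  have hdj_pos : 0 < dj := by
    refine Finset.sum_pos' (fun k _ => by positivity) ⟨i, himem, ?_⟩
    have : (dist j i)⁻¹ > 0 := inv_pos.mpr (by rwa [dist_comm])
    positivity
  set μ := Dprob (Finset.univ.erase i) t i with hμ_def
  set ν := Dprob (Finset.univ.erase j) t j with hν_def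
  have hμ1 : ∑ v, μ v = 1 := Dprob_sum_one i t hdi_pos.ne'
  have hν1 : ∑ v, ν v = 1 := Dprob_sum_one j t hdj_pos.ne'
  have hμ0 : ∀ v, 0 ≤ μ v := Dprob_nonneg i t ht0.le ht1.le hdi_pos.le
  have hν0 : ∀ v, 0 ≤ ν v := Dprob_nonneg j t ht0.le ht1.le hdj_pos.le
  set f : V → ℝ := fun v => dist i j * dist j v / (dist i v + dist j v) with hf_def
  have hs : ∀ u : V, dist i j ≤ dist i u + dist j u := by
    intro u
    calc dist i j ≤ dist i u + dist u j := dist_triangle i u j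
      _ = dist i u + dist j u := by rw [dist_comm u j]
  have hspos : ∀ u : V, 0 < dist i u + dist j u := fun u => lt_of_lt_of_le hD (hs u)
  have hfi : f i = dist i j := by
    show dist i j * dist j i / (dist i i + dist j i) = dist i j
    rw [dist_self, dist_comm j i, zero_add, mul_div_assoc, div_self hD.ne', mul_one]
  have hfj : f j = 0 := by
    show dist i j * dist j j / (dist i j + dist j j) = 0
    rw [dist_self, mul_zero, zero_div]
  have hLip : ∀ u v : V, f u - f v ≤ dist u v := by
    intro u v
    have h1 : dist j u ≤ dist j v + dist u v := by
      calc dist j u ≤ dist j v + dist v u := dist_triangle j v u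
        _ = dist j v + dist u v := by rw [dist_comm v u]
    have h2 : dist i v ≤ dist i u + dist u v := dist_triangle i u v
    have hsu := hspos u
    have hsv := hspos v
    show dist i j * dist j u / (dist i u + dist j u) -
        dist i j * dist j v / (dist i v + dist j v) ≤ dist u v
    rw [div_sub_div _ _ hsu.ne' hsv.ne', div_le_iff₀ (by positivity)]
    have hd0 : (0:ℝ) ≤ dist u v := dist_nonneg
    have hb1 : dist j u * dist i v ≤ (dist j v + dist u v) * dist i v :=
      mul_le_mul_of_nonneg_right h1 dist_nonneg
    have hb2 : dist j v * dist i v ≤ dist j v * (dist i u + dist u v) :=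
      mul_le_mul_of_nonneg_left h2 dist_nonneg
    have hb3 : dist i j * (dist u v * (dist i v + dist j v)) ≤
        (dist i u + dist j u) * (dist u v * (dist i v + dist j v)) :=
      mul_le_mul_of_nonneg_right (hs u) (by positivity)
    nlinarith [hD.le, dist_nonneg (x := i) (y := v), dist_nonneg (x := j) (y := v),
      dist_nonneg (x := i) (y := u), dist_nonneg (x := j) (y := u)]
  -- the set S2 of points other than i, j
  set S2 := (Finset.univ.erase i).erase j with hS2_def
  have hmemS2 : ∀ k ∈ S2, k ≠ i ∧ k ≠ j := by
    intro k hk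
    have h1 := Finset.mem_erase.1 hk
    exact ⟨(Finset.mem_erase.1 h1.2).1, h1.1⟩
  have hpk : ∀ k ∈ S2, 0 < dist i k := fun k hk => dist_pos.mpr (Ne.symm (hmemS2 k hk).1)
  have hqk : ∀ k ∈ S2, 0 < dist j k := fun k hk => dist_pos.mpr (Ne.symm (hmemS2 k hk).2)
  set SA := ∑ k ∈ S2, ((dist i k)⁻¹) ^ 2 with hSA_def
  set SB := ∑ k ∈ S2, ((dist j k)⁻¹) ^ 2 with hSB_def
  set SAR := ∑ k ∈ S2, ((dist i k)⁻¹) ^ 2 * (dist j k / (dist i k + dist j k)) with hSAR_def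
  set SBR := ∑ k ∈ S2, ((dist j k)⁻¹) ^ 2 * (dist j k / (dist i k + dist j k)) with hSBR_def
  have hdi_eq : di = ((dist i j)⁻¹) ^ 2 + SA := by
    rw [hdi_def]
    show ∑ k ∈ Finset.univ.erase i, ((dist i k)⁻¹) ^ 2 = ((dist i j)⁻¹) ^ 2 + SA
    rw [← Finset.sum_erase_add _ _ hjmem, add_comm]
  have hdj_eq : dj = ((dist i j)⁻¹) ^ 2 + SB := by
    rw [hdj_def]
    show ∑ k ∈ Finset.univ.erase j, ((dist j k)⁻¹) ^ 2 = ((dist i j)⁻¹) ^ 2 + SB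
    rw [← Finset.sum_erase_add _ _ himem, add_comm, dist_comm j i]
    congr 1
    rw [hSB_def, hS2_def, Finset.erase_right_comm]
  -- value of the dual functional on μ
  have hμf : ∑ u, μ u * f u = (1 - t) * dist i j + t * dist i j / di * SAR := by
    rw [← Finset.sum_erase_add _ _ (Finset.mem_univ i)]
    have hμi : μ i = 1 - t := by simp [hμ_def, Dprob]
    have hrest : ∑ u ∈ Finset.univ.erase i, μ u * f u = t * dist i j / di * SAR := by
      rw [← Finset.sum_erase_add _ _ hjmem]
      have hj0 : μ j * f j = 0 := by rw [hfj, mul_zero]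
      rw [hj0, add_zero, hSAR_def, Finset.mul_sum]
      refine Finset.sum_congr rfl fun k hk => ?_
      have hki := (hmemS2 k hk).1
      have hμk : μ k = t * ((dist i k)⁻¹) ^ 2 / di := by
        rw [hμ_def]
        show Dprob (Finset.univ.erase i) t i k = _
        rw [Dprob, if_neg hki, if_pos (Finset.mem_of_mem_erase hk)]
      rw [hμk]
      show t * ((dist i k)⁻¹) ^ 2 / di * (dist i j * dist j k / (dist i k + dist j k)) =
        t * dist i j / di * (((dist i k)⁻¹) ^ 2 * (dist j k / (dist i k + dist j k)))
      ring
    rw [hrest, hμi, hfi]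
    ring
  -- value of the dual functional on ν
  have hνf : ∑ v, ν v * f v = t * dist i j / dj * (((dist i j)⁻¹) ^ 2 + SBR) := by
    rw [← Finset.sum_erase_add _ _ (Finset.mem_univ j)]
    have hj0 : ν j * f j = 0 := by rw [hfj, mul_zero]
    rw [hj0, add_zero, ← Finset.sum_erase_add _ _ himem]
    have hνi : ν i = t * ((dist i j)⁻¹) ^ 2 / dj := by
      rw [hν_def]
      show Dprob (Finset.univ.erase j) t j i = _
      rw [Dprob, if_neg hij, if_pos himem, dist_comm j i]
    have hrest : ∑ v ∈ (Finset.univ.erase j).erase i, ν v * f v = t * dist i j / dj * SBR := by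
      rw [show (Finset.univ.erase j).erase i = S2 from by
        rw [hS2_def, Finset.erase_right_comm]]
      rw [hSBR_def, Finset.mul_sum]
      refine Finset.sum_congr rfl fun k hk => ?_
      have hkj := (hmemS2 k hk).2
      have hνk : ν k = t * ((dist j k)⁻¹) ^ 2 / dj := by
        rw [hν_def]
        show Dprob (Finset.univ.erase j) t j k = _
        rw [Dprob, if_neg hkj, if_pos (Finset.mem_erase.mpr ⟨hkj, Finset.mem_univ k⟩)]
      rw [hνk]
      show t * ((dist j k)⁻¹) ^ 2 / dj * (dist i j * dist j k / (dist i k + dist j k)) =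
        t * dist i j / dj * (((dist j k)⁻¹) ^ 2 * (dist j k / (dist i k + dist j k)))
      ring
    rw [hrest, hνi, hfi]
    ring
  -- the two nonnegative quantities
  have hN1 : 0 ≤ SB * SAR - SA * SBR := by
    have expand : SB * SAR - SA * SBR = ∑ u ∈ S2, ∑ v ∈ S2,
        (((dist j u)⁻¹) ^ 2 * (((dist i v)⁻¹) ^ 2 * (dist j v / (dist i v + dist j v))) -
         ((dist i u)⁻¹) ^ 2 * (((dist j v)⁻¹) ^ 2 * (dist j v / (dist i v + dist j v)))) := by
      rw [hSB_def, hSA_def, hSAR_def, hSBR_def, Finset.sum_mul_sum, Finset.sum_mul_sum,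
        ← Finset.sum_sub_distrib]
      exact Finset.sum_congr rfl fun u _ => (Finset.sum_sub_distrib _ _).symm
    rw [expand]
    have flip : ∑ u ∈ S2, ∑ v ∈ S2,
        (((dist j u)⁻¹) ^ 2 * (((dist i v)⁻¹) ^ 2 * (dist j v / (dist i v + dist j v))) -
         ((dist i u)⁻¹) ^ 2 * (((dist j v)⁻¹) ^ 2 * (dist j v / (dist i v + dist j v)))) =
        ∑ u ∈ S2, ∑ v ∈ S2,
        (((dist j v)⁻¹) ^ 2 * (((dist i u)⁻¹) ^ 2 * (dist j u / (dist i u + dist j u))) -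
         ((dist i v)⁻¹) ^ 2 * (((dist j u)⁻¹) ^ 2 * (dist j u / (dist i u + dist j u)))) :=
      Finset.sum_comm
    have key : 0 ≤ ∑ u ∈ S2, ∑ v ∈ S2,
        ((((dist j u)⁻¹) ^ 2 * (((dist i v)⁻¹) ^ 2 * (dist j v / (dist i v + dist j v))) -
          ((dist i u)⁻¹) ^ 2 * (((dist j v)⁻¹) ^ 2 * (dist j v / (dist i v + dist j v)))) +
         (((dist j v)⁻¹) ^ 2 * (((dist i u)⁻¹) ^ 2 * (dist j u / (dist i u + dist j u))) -
          ((dist i v)⁻¹) ^ 2 * (((dist j u)⁻¹) ^ 2 * (dist j u / (dist i u + dist j u))))) := by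
      refine Finset.sum_nonneg fun u hu => Finset.sum_nonneg fun v hv => ?_
      have hp := pair_aux (dist i u) (dist j u) (dist i v) (dist j v)
        (hpk u hu) (hqk u hu) (hpk v hv) (hqk v hv)
      nlinarith [hp]
    have split : ∑ u ∈ S2, ∑ v ∈ S2,
        ((((dist j u)⁻¹) ^ 2 * (((dist i v)⁻¹) ^ 2 * (dist j v / (dist i v + dist j v))) -
          ((dist i u)⁻¹) ^ 2 * (((dist j v)⁻¹) ^ 2 * (dist j v / (dist i v + dist j v)))) +
         (((dist j v)⁻¹) ^ 2 * (((dist i u)⁻¹) ^ 2 * (dist j u / (dist i u + dist j u))) -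
          ((dist i v)⁻¹) ^ 2 * (((dist j u)⁻¹) ^ 2 * (dist j u / (dist i u + dist j u))))) =
        (∑ u ∈ S2, ∑ v ∈ S2,
        (((dist j u)⁻¹) ^ 2 * (((dist i v)⁻¹) ^ 2 * (dist j v / (dist i v + dist j v))) -
         ((dist i u)⁻¹) ^ 2 * (((dist j v)⁻¹) ^ 2 * (dist j v / (dist i v + dist j v))))) +
        (∑ u ∈ S2, ∑ v ∈ S2,
        (((dist j v)⁻¹) ^ 2 * (((dist i u)⁻¹) ^ 2 * (dist j u / (dist i u + dist j u))) -
         ((dist i v)⁻¹) ^ 2 * (((dist j u)⁻¹) ^ 2 * (dist j u / (dist i u + dist j u))))) := by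
      rw [← Finset.sum_add_distrib]
      exact Finset.sum_congr rfl fun u _ => Finset.sum_add_distrib
    rw [split, ← flip] at key
    linarith
  have hN2 : 0 ≤ SAR - SBR + (SB - SA) / 2 := by
    have expand : ∑ k ∈ S2, ((((dist i k)⁻¹) ^ 2 - ((dist j k)⁻¹) ^ 2) *
        (dist j k / (dist i k + dist j k) - 1 / 2)) = SAR - SBR + (SB - SA) / 2 := by
      rw [hSAR_def, hSBR_def, hSB_def, hSA_def]
      calc ∑ k ∈ S2, ((((dist i k)⁻¹) ^ 2 - ((dist j k)⁻¹) ^ 2) *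
            (dist j k / (dist i k + dist j k) - 1 / 2))
          = ∑ k ∈ S2, (((dist i k)⁻¹) ^ 2 * (dist j k / (dist i k + dist j k)) -
              ((dist j k)⁻¹) ^ 2 * (dist j k / (dist i k + dist j k)) +
              (((dist j k)⁻¹) ^ 2 - ((dist i k)⁻¹) ^ 2) * (1 / 2)) :=
            Finset.sum_congr rfl fun k _ => by ring
        _ = _ := by
            rw [Finset.sum_add_distrib, Finset.sum_sub_distrib, ← Finset.sum_mul,
              Finset.sum_sub_distrib]
            ring
    have pos : 0 ≤ ∑ k ∈ S2, ((((dist i k)⁻¹) ^ 2 - ((dist j k)⁻¹) ^ 2) *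
        (dist j k / (dist i k + dist j k) - 1 / 2)) :=
      Finset.sum_nonneg fun k hk => half_aux (dist i k) (dist j k) (hpk k hk) (hqk k hk)
    linarith [expand ▸ pos]
  -- lower bound for the dual functional value
  have hdual : (1 - t) * dist i j - t / (2 * dist i j) * (1 / di + 1 / dj) ≤
      ∑ u, μ u * f u - ∑ v, ν v * f v := by
    rw [hμf, hνf, ← sub_nonneg]
    have hdi' : (0:ℝ) < ((dist i j)⁻¹) ^ 2 + SA := hdi_eq ▸ hdi_pos
    have hdj' : (0:ℝ) < ((dist i j)⁻¹) ^ 2 + SB := hdj_eq ▸ hdj_pos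
    have heq : (1 - t) * dist i j + t * dist i j / di * SAR -
        t * dist i j / dj * (((dist i j)⁻¹) ^ 2 + SBR) -
        ((1 - t) * dist i j - t / (2 * dist i j) * (1 / di + 1 / dj)) =
        t / (di * dj) * (dist i j * (SB * SAR - SA * SBR) +
          (SAR - SBR + (SB - SA) / 2) / dist i j) := by
      have hSA : SA = di - ((dist i j)⁻¹) ^ 2 := by linarith
      have hSB : SB = dj - ((dist i j)⁻¹) ^ 2 := by linarith
      rw [hSA, hSB]
      have hdi0 := hdi_pos.ne'
      have hdj0 := hdj_pos.ne'
      have hD0 := hD.ne'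
      field_simp
      ring
    rw [heq]
    have h1 : 0 ≤ dist i j * (SB * SAR - SA * SBR) + (SAR - SBR + (SB - SA) / 2) / dist i j :=
      add_nonneg (mul_nonneg hD.le hN1) (div_nonneg hN2 hD.le)
    have h2 : 0 ≤ t / (di * dj) := div_nonneg ht0.le (mul_nonneg hdi_pos.le hdj_pos.le)
    exact mul_nonneg h2 h1
  -- conclude via the definition of Wcost
  rw [ge_iff_le, Wcost]
  refine le_csInf ⟨∑ u, ∑ v, (μ u * ν v) * dist u v,
    fun u v => μ u * ν v,
    ⟨fun u v => mul_nonneg (hμ0 u) (hν0 v),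
     fun u => by rw [← Finset.mul_sum, hν1, mul_one],
     fun v => by rw [← Finset.sum_mul, hμ1, one_mul]⟩, rfl⟩ ?_
  rintro c ⟨A, ⟨hA0, hArow, hAcol⟩, rfl⟩
  have hbound : ∑ u, μ u * f u - ∑ v, ν v * f v ≤ ∑ u, ∑ v, A u v * dist u v := by
    have e1 : ∑ u, μ u * f u = ∑ u, ∑ v, A u v * f u := by
      refine Finset.sum_congr rfl fun u _ => ?_
      rw [← hArow u, Finset.sum_mul]
    have e2 : ∑ v, ν v * f v = ∑ u, ∑ v, A u v * f v := by
      rw [Finset.sum_comm]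
      refine Finset.sum_congr rfl fun v _ => ?_
      rw [← hAcol v, Finset.sum_mul]
    rw [e1, e2, ← Finset.sum_sub_distrib]
    have e3 : ∑ u, (∑ v, A u v * f u - ∑ v, A u v * f v) =
        ∑ u, ∑ v, (A u v * f u - A u v * f v) := by
      exact Finset.sum_congr rfl fun u _ => (Finset.sum_sub_distrib _ _).symm
    rw [e3]
    refine Finset.sum_le_sum fun u _ => Finset.sum_le_sum fun v _ => ?_
    have : A u v * f u - A u v * f v = A u v * (f u - f v) := by ring
    rw [this]
    exact mul_le_mul_of_nonneg_left (hLip u v) (hA0 u v)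
  linarith
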